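/- Consider the map Φ : ℝ⁴ → ℝ⁴ given by Φ(u,v,k,F) = (−uv² + F(1−u), uv² − (F+k)v, tr Df(u,v), det Df(u,v)), where Df(u,v) = [[−(F+v²), −2uv], [v², 2uv − (F+k)]] so that tr Df(u,v) = −2F − k + 2uv − v² and det Df(u,v) = F² + Fk − 2Fuv + Fv² + kv². Then the Jacobian determinant of Φ at the point (u,v,k,F) = (1/2, 1/4, 1/16, 1/16) equals −1/512; in particular Φ is a local diffeomorphism near the Takens–Bogdanov point (this is the transversality condition for the Takens–Bogdanov bifurcation). -/

import Mathlib

set_option maxHeartbeats 1000000 in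
open ContinuousLinearMap in
/-- Transversality at the Takens–Bogdanov point: the Jacobian determinant of
`Φ(u,v,k,F) = (f₁, f₂, tr Df, det Df)` at `(u,v,k,F) = (1/2, 1/4, 1/16, 1/16)`
equals `−1/512`. Here coordinates are `x 0 = u`, `x 1 = v`, `x 2 = k`, `x 3 = F`. -/
theorem grayScott_BT_transversality
    (Φ : (Fin 4 → ℝ) → (Fin 4 → ℝ))
    (hΦ : ∀ x : Fin 4 → ℝ,
      Φ x = ![-(x 0) * (x 1) ^ 2 + (x 3) * (1 - x 0),
              (x 0) * (x 1) ^ 2 - ((x 3) + (x 2)) * (x 1),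
              -2 * (x 3) - (x 2) + 2 * (x 0) * (x 1) - (x 1) ^ 2,
              (x 3) ^ 2 + (x 3) * (x 2) - 2 * (x 3) * (x 0) * (x 1)
                + (x 3) * (x 1) ^ 2 + (x 2) * (x 1) ^ 2]) :
    LinearMap.det
      ((fderiv ℝ Φ ![1 / 2, 1 / 4, 1 / 16, 1 / 16]).toLinearMap) = -(1 / 512) := by
  have hfun : Φ = fun x => ![-(x 0) * (x 1 * x 1) + x 3 * (1 - x 0),
              x 0 * (x 1 * x 1) - (x 3 + x 2) * x 1,
              -2 * x 3 - x 2 + 2 * x 0 * x 1 - x 1 * x 1,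
              x 3 * x 3 + x 3 * x 2 - 2 * x 3 * x 0 * x 1
                + x 3 * (x 1 * x 1) + x 2 * (x 1 * x 1)] := by
    funext x
    rw [hΦ x]
    funext i
    fin_cases i <;>
      simp only [Matrix.cons_val_zero, Matrix.cons_val_one, Matrix.head_cons,
        Matrix.cons_val_two, Matrix.tail_cons, Matrix.cons_val_three, Fin.mk_zero,
        Fin.mk_one, Fin.isValue] <;> ring
  subst hfun
  set p : Fin 4 → ℝ := ![1 / 2, 1 / 4, 1 / 16, 1 / 16] with hp
  let pr : Fin 4 → ((Fin 4 → ℝ) →L[ℝ] ℝ) := fun i => proj i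
  have h0 : HasFDerivAt (fun x : Fin 4 → ℝ => x 0) (pr 0) p := (pr 0).hasFDerivAt
  have h1 : HasFDerivAt (fun x : Fin 4 → ℝ => x 1) (pr 1) p := (pr 1).hasFDerivAt
  have h2 : HasFDerivAt (fun x : Fin 4 → ℝ => x 2) (pr 2) p := (pr 2).hasFDerivAt
  have h3 : HasFDerivAt (fun x : Fin 4 → ℝ => x 3) (pr 3) p := (pr 3).hasFDerivAt
  set D : Fin 4 → ((Fin 4 → ℝ) →L[ℝ] ℝ) :=
    ![(-(1/8) : ℝ) • pr 0 + (-(1/4) : ℝ) • pr 1 + (1/2 : ℝ) • pr 3,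
      ((1/16) : ℝ) • pr 0 + ((1/8) : ℝ) • pr 1 + (-(1/4) : ℝ) • pr 2
        + (-(1/4) : ℝ) • pr 3,
      ((1/2) : ℝ) • pr 0 + ((1/2) : ℝ) • pr 1 + (-1 : ℝ) • pr 2
        + (-2 : ℝ) • pr 3,
      (-(1/32) : ℝ) • pr 0 + ((1/8) : ℝ) • pr 2] with hD
  have hL : HasFDerivAt
      (fun x : Fin 4 → ℝ => ![-(x 0) * (x 1 * x 1) + x 3 * (1 - x 0),
              x 0 * (x 1 * x 1) - (x 3 + x 2) * x 1,
              -2 * x 3 - x 2 + 2 * x 0 * x 1 - x 1 * x 1,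
              x 3 * x 3 + x 3 * x 2 - 2 * x 3 * x 0 * x 1
                + x 3 * (x 1 * x 1) + x 2 * (x 1 * x 1)])
      (ContinuousLinearMap.pi D) p := by
    rw [hasFDerivAt_pi']
    intro i
    fin_cases i <;>
      simp only [Fin.isValue, Matrix.cons_val_zero, Matrix.cons_val_one, Matrix.head_cons,
        Matrix.cons_val_two, Matrix.tail_cons, Matrix.cons_val_three, proj_pi, hD,
        Fin.mk_zero, Fin.mk_one]
    · exact ((h0.neg.mul (h1.mul h1)).add
        (h3.mul ((hasFDerivAt_const (1:ℝ) p).sub h0))).congr_fderiv (by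
          ext y; simp [hp, pr]; ring)
    · exact ((h0.mul (h1.mul h1)).sub ((h3.add h2).mul h1)).congr_fderiv (by
          ext y; simp [hp, pr]; ring)
    · exact (((((hasFDerivAt_const (-2:ℝ) p).mul h3).sub h2).add
        (((hasFDerivAt_const (2:ℝ) p).mul h0).mul h1)).sub (h1.mul h1)).congr_fderiv (by
          ext y; simp [hp, pr]; ring)
    · exact (((((h3.mul h3).add (h3.mul h2)).sub
        ((((hasFDerivAt_const (2:ℝ) p).mul h3).mul h0).mul h1)).add
        (h3.mul (h1.mul h1))).add (h2.mul (h1.mul h1))).congr_fderiv (by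
          ext y; simp [hp, pr]; ring)
  rw [hL.fderiv, ← LinearMap.det_toMatrix (Pi.basisFun ℝ (Fin 4))]
  have hM : LinearMap.toMatrix (Pi.basisFun ℝ (Fin 4)) (Pi.basisFun ℝ (Fin 4))
      (ContinuousLinearMap.pi D).toLinearMap =
      !![-(1/8), -(1/4), 0, 1/2;
         1/16, 1/8, -(1/4), -(1/4);
         1/2, 1/2, -1, -2;
         -(1/32), 0, 1/8, 0] := by
    ext i j
    fin_cases i <;> fin_cases j <;>
      simp only [LinearMap.toMatrix_apply, Pi.basisFun_repr, Pi.basisFun_apply,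
        ContinuousLinearMap.coe_coe, ContinuousLinearMap.pi_apply, hD, pr,
        Matrix.cons_val_zero, Matrix.cons_val_one, Matrix.head_cons, Matrix.cons_val_two,
        Matrix.tail_cons, Matrix.cons_val_three, ContinuousLinearMap.add_apply,
        ContinuousLinearMap.smul_apply, ContinuousLinearMap.proj_apply, smul_eq_mul,
        Matrix.of_apply, Matrix.cons_val', Matrix.empty_val', Matrix.cons_val_fin_one,
        Fin.mk_zero, Fin.mk_one, Fin.isValue] <;>
      norm_num [Pi.single_apply, Fin.ext_iff] <;> decide
  rw [hM]
  simp [Matrix.det_succ_row_zero, Fin.sum_univ_succ, Fin.succAbove]; norm_num
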